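/- Let ω = exp(2πi/3). For every α ∈ ℂ and every n ∈ ℕ, writing x = h_0(α), y = h_1(α), z = h_2(α), the Tchebycheff 3-polynomial of the zero-th kind has the explicit form h_0(n·α) = Σ_{k=0}^{n} Σ_{i=0}^{n−k} C(n,k) · C(n−k,i) · δ₃(i,k) · x^{n−k−i} · y^{i} · z^{k}, where C(·,·) are binomial coefficients and δ₃(i,k) = 1 if i ≡ k (mod 3) and δ₃(i,k) = 0 otherwise. -/

import Mathlib

open Complex Finset

/-- `ω = exp(2πi/3)`, the primitive cube root of unity. -/
noncomputable def om3 : ℂ := Complex.exp (2 * Real.pi * Complex.I / 3)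

/-- The third-order hyperbolic function
`h_k(z) = (1/3) · Σ_{s=0}^{2} ω^{−k·s} · exp(ω^s · z)`. -/
noncomputable def hfun3 (k : ℕ) (z : ℂ) : ℂ :=
  (1 / (3 : ℂ)) * ∑ s ∈ Finset.range 3, om3 ^ (-((k * s : ℕ) : ℤ)) * Complex.exp (om3 ^ s * z)

lemma om3_cube : om3 ^ 3 = 1 := by
  rw [om3, ← Complex.exp_nat_mul]
  norm_num
  rw [show (3 : ℂ) * (2 * Real.pi * Complex.I / 3) = 2 * Real.pi * Complex.I by ring]
  exact Complex.exp_two_pi_mul_I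

lemma om3_ne_one : om3 ≠ 1 := by
  intro h
  rw [om3, Complex.exp_eq_one_iff] at h
  obtain ⟨k, hk⟩ := h
  have hπ : (Real.pi : ℂ) ≠ 0 := by
    exact_mod_cast Real.pi_ne_zero
  have hI : Complex.I ≠ 0 := Complex.I_ne_zero
  have ha : (2 * (Real.pi : ℂ) * Complex.I) ≠ 0 := by
    simp [hπ, hI]
  field_simp at hk
  have h3 : (2 * (Real.pi : ℂ) * Complex.I) * (3 * (k : ℂ)) =
      (2 * (Real.pi : ℂ) * Complex.I) * 1 := by linear_combination (-(2 * (Real.pi : ℂ) * Complex.I)) * hk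
  have h4 : (3 : ℂ) * k = 1 := mul_left_cancel₀ ha h3
  have : (3 * k : ℤ) = (1 : ℤ) := by exact_mod_cast h4
  omega

lemma om3_sum : 1 + om3 + om3 ^ 2 = 0 := by
  have h : (om3 - 1) * (om3 ^ 2 + om3 + 1) = 0 := by
    linear_combination om3_cube
  rcases mul_eq_zero.mp h with h1 | h2
  · exact absurd (sub_eq_zero.mp h1) om3_ne_one
  · linear_combination h2

lemma geom3 (m : ℕ) : ∑ s ∈ Finset.range 3, (om3 ^ m) ^ s = if m % 3 = 0 then 3 else 0 := by
  have hm : om3 ^ m = om3 ^ (m % 3) := by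
    conv_lhs => rw [← Nat.div_add_mod m 3]
    rw [pow_add, pow_mul, om3_cube, one_pow, one_mul]
  rw [hm]
  have h3 : m % 3 < 3 := Nat.mod_lt _ (by norm_num)
  interval_cases h : m % 3
  · simp
  · simp only [if_neg (by norm_num : ¬ (1:ℕ) = 0), Finset.sum_range_succ,
      Finset.sum_range_zero, pow_one]
    linear_combination om3_sum
  · simp only [if_neg (by norm_num : ¬ (2:ℕ) = 0), Finset.sum_range_succ,
      Finset.sum_range_zero, pow_one]
    linear_combination om3_sum + om3 * om3_cube

lemma om3_ne_zero : om3 ≠ 0 := Complex.exp_ne_zero _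

lemma om3_inv : om3⁻¹ = om3 ^ 2 :=
  inv_eq_of_mul_eq_one_right (by linear_combination om3_cube)

lemma om3_sq_inv : (om3 ^ 2)⁻¹ = om3 :=
  inv_eq_of_mul_eq_one_left (by linear_combination om3_cube)

lemma om3_four_inv : (om3 ^ 4)⁻¹ = om3 ^ 2 :=
  inv_eq_of_mul_eq_one_left (by linear_combination (om3 ^ 3 + 1) * om3_cube)

lemma om3_zpow_neg1 : om3 ^ (-1 : ℤ) = om3 ^ 2 := by
  rw [zpow_neg, zpow_one, om3_inv]

lemma om3_zpow_neg2 : om3 ^ (-2 : ℤ) = om3 := by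
  rw [zpow_neg, show ((2:ℤ)) = ((2:ℕ):ℤ) from rfl, zpow_natCast]
  exact inv_eq_of_mul_eq_one_left (by linear_combination om3_cube)

lemma om3_zpow_neg4 : om3 ^ (-4 : ℤ) = om3 ^ 2 := by
  rw [zpow_neg, show ((4:ℤ)) = ((4:ℕ):ℤ) from rfl, zpow_natCast]
  exact inv_eq_of_mul_eq_one_left (by linear_combination (om3 ^ 3 + 1) * om3_cube)

lemma hx_eq (α : ℂ) : hfun3 0 α =
    (1/3) * (Complex.exp α + Complex.exp (om3 * α) + Complex.exp (om3 ^ 2 * α)) := by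
  simp [hfun3, Finset.sum_range_succ]

lemma hy_eq (α : ℂ) : hfun3 1 α =
    (1/3) * (Complex.exp α + om3 ^ 2 * Complex.exp (om3 * α) + om3 * Complex.exp (om3 ^ 2 * α)) := by
  simp [hfun3, Finset.sum_range_succ, zpow_ofNat]
  rw [om3_inv, om3_sq_inv]

lemma hz_eq (α : ℂ) : hfun3 2 α =
    (1/3) * (Complex.exp α + om3 * Complex.exp (om3 * α) + om3 ^ 2 * Complex.exp (om3 ^ 2 * α)) := by
  simp [hfun3, Finset.sum_range_succ, zpow_ofNat]
  rw [om3_sq_inv, om3_four_inv]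

lemma hE (α : ℂ) : ∀ s ∈ Finset.range 3, Complex.exp (om3 ^ s * α) =
    hfun3 0 α + om3 ^ s * hfun3 1 α + om3 ^ (2 * s) * hfun3 2 α := by
  intro s hs
  rw [Finset.mem_range] at hs
  rw [hx_eq, hy_eq, hz_eq]
  interval_cases s
  · simp only [pow_zero, one_mul, Nat.mul_zero]
    linear_combination (-(1/3) * (Complex.exp (om3 * α) + Complex.exp (om3 ^ 2 * α))) * om3_sum
  · simp only [pow_one, Nat.mul_one]
    linear_combination (-(1/3) * (Complex.exp α + Complex.exp (om3 ^ 2 * α))) * om3_sum +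
      (-(2/3) * Complex.exp (om3 * α) - (1/3) * om3 * Complex.exp (om3 ^ 2 * α)) * om3_cube
  · linear_combination (-(1/3) * (Complex.exp α + Complex.exp (om3 * α))) * om3_sum +
      (-(1/3) * (om3 * Complex.exp α + (om3 + om3 ^ 2) * Complex.exp (om3 * α)
        + (2 + om3 ^ 3) * Complex.exp (om3 ^ 2 * α))) * om3_cube

/-- Explicit form of the Tchebycheff 3-polynomial of the zero-th kind:
`h_0(nα) = Σ_{k=0}^{n} Σ_{i=0}^{n−k} C(n,k)·C(n−k,i)·δ₃(i,k)·x^{n−k−i}·yⁱ·zᵏ`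
with `x = h_0(α)`, `y = h_1(α)`, `z = h_2(α)` and `δ₃(i,k) = 1` iff `i ≡ k (mod 3)`. -/
theorem tchebycheff_explicit_form (α : ℂ) (n : ℕ) :
    hfun3 0 ((n : ℂ) * α) =
      ∑ k ∈ Finset.range (n + 1), ∑ i ∈ Finset.range (n - k + 1),
        (n.choose k : ℂ) * ((n - k).choose i : ℂ) * (if i % 3 = k % 3 then 1 else 0) *
          hfun3 0 α ^ (n - k - i) * hfun3 1 α ^ i * hfun3 2 α ^ k := by
  have h1 : hfun3 0 ((n : ℂ) * α) =
      (1/3) * ∑ s ∈ Finset.range 3, Complex.exp (om3 ^ s * ((n : ℂ) * α)) := by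
    simp [hfun3]
  rw [h1]
  have h2 : ∀ s ∈ Finset.range 3, Complex.exp (om3 ^ s * ((n : ℂ) * α)) =
      ∑ k ∈ Finset.range (n + 1), ∑ i ∈ Finset.range (n - k + 1),
        (om3 ^ (2 * s) * hfun3 2 α) ^ k *
          ((om3 ^ s * hfun3 1 α) ^ i * hfun3 0 α ^ (n - k - i) * ((n - k).choose i : ℂ)) *
          (n.choose k : ℂ) := by
    intro s hs
    rw [show om3 ^ s * ((n : ℂ) * α) = (n : ℂ) * (om3 ^ s * α) by ring,
      Complex.exp_nat_mul, hE α s hs,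
      show hfun3 0 α + om3 ^ s * hfun3 1 α + om3 ^ (2 * s) * hfun3 2 α
        = om3 ^ (2 * s) * hfun3 2 α + (om3 ^ s * hfun3 1 α + hfun3 0 α) by ring,
      add_pow]
    refine Finset.sum_congr rfl fun k _ => ?_
    rw [add_pow, Finset.mul_sum, Finset.sum_mul]
  rw [Finset.sum_congr rfl h2]
  simp only [Finset.mul_sum]
  rw [Finset.sum_comm]
  refine Finset.sum_congr rfl fun k hk => ?_
  rw [Finset.sum_comm]
  refine Finset.sum_congr rfl fun i hi => ?_
  have hterm : ∀ s ∈ Finset.range 3,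
      (1/3 : ℂ) * ((om3 ^ (2 * s) * hfun3 2 α) ^ k *
        ((om3 ^ s * hfun3 1 α) ^ i * hfun3 0 α ^ (n - k - i) * ((n - k).choose i : ℂ)) *
        (n.choose k : ℂ)) =
      ((n.choose k : ℂ) * ((n - k).choose i : ℂ) * hfun3 0 α ^ (n - k - i) *
        hfun3 1 α ^ i * hfun3 2 α ^ k / 3) * (om3 ^ (2 * k + i)) ^ s := by
    intro s _
    ring
  rw [Finset.sum_congr rfl hterm, ← Finset.mul_sum, geom3]
  have hiff : (i % 3 = k % 3) ↔ ((2 * k + i) % 3 = 0) := by omega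
  simp only [hiff]
  split_ifs with h
  · ring
  · ring
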